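/- For any prae-dilator T and any Bachmann-Howard system (X, ι_X, L_X), the relation <_{ϑ_T(X)} is transitive; hence (ϑ_T(X), <_{ϑ_T(X)}) is a linear order. -/

import Mathlib

/-! Data for a Bachmann-Howard system: `X` is a linear order, `S` is the linear order
`T_X` (the value of a prae-dilator at `X`), whose elements `σ` simultaneously index the
terms `ϑσ` making up the set `ϑ_T(X)`.  So `supp : S → Finset X` is the support function
`supp^T_X`, `ι : X → S` is the function `ι_X : X → ϑ_T(X)` (identifying terms with their
indices), and `L : X → ℕ` is the length function `L_X`. -/
structure BHData (X S : Type) [LinearOrder X] [LinearOrder S] where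
  supp : S → Finset X
  ι : X → S
  L : X → ℕ

variable {X S : Type} [LinearOrder X] [LinearOrder S]

/-- The induced length function `L_{ϑ_T(X)}(ϑσ) = max{L_X(x) | x ∈ supp σ} + 1`
(with the maximum over the empty set being `0`). -/
def BHData.Lv (D : BHData X S) (σ : S) : ℕ := (D.supp σ).sup D.L + 1

/-- `(X, ι, L)` is a Bachmann-Howard system: `L_{ϑ_T(X)} ∘ ι_X = L_X`. -/
def BHData.IsBH (D : BHData X S) : Prop := ∀ x : X, D.Lv (D.ι x) = D.L x

/-- The recursively defined relation `ϑσ <_{ϑ_T(X)} ϑτ`: either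
(i) `σ <_{T_X} τ` and `ι_X(x) < ϑτ` for all `x ∈ supp σ`, or
(ii) `τ <_{T_X} σ` and `ϑσ ≤ ι_X(x)` for some `x ∈ supp τ`
(the clause (ii) is split according to `ϑσ < ι_X(x)` or `ϑσ = ι_X(x)`).
For a Bachmann-Howard system this least fixed point satisfies the defining
recursion, which is well-founded along `Lv`. -/
inductive BHData.lt (D : BHData X S) : S → S → Prop
  | left {σ τ : S} : σ < τ → (∀ x ∈ D.supp σ, D.lt (D.ι x) τ) → D.lt σ τ
  | right_lt {σ τ : S} (x : X) : τ < σ → x ∈ D.supp τ → D.lt σ (D.ι x) → D.lt σ τ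
  | right_eq {σ τ : S} (x : X) : τ < σ → x ∈ D.supp τ → σ = D.ι x → D.lt σ τ

lemma BHData.lv_iota_lt (D : BHData X S) (hD : D.IsBH) {σ : S} {x : X}
    (hx : x ∈ D.supp σ) : D.Lv (D.ι x) < D.Lv σ := by
  rw [hD x]
  exact Nat.lt_succ_of_le (Finset.le_sup hx)

lemma BHData.lt_irrefl_aux (D : BHData X S) : ∀ σ : S, ¬ D.lt σ σ := by
  intro σ h
  cases h with
  | left h _ => exact absurd h (lt_irrefl σ)
  | right_lt x h _ _ => exact absurd h (lt_irrefl σ)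
  | right_eq x h _ _ => exact absurd h (lt_irrefl σ)

lemma BHData.lt_asymm_aux (D : BHData X S) (hD : D.IsBH) :
    ∀ n, ∀ σ τ : S, D.Lv σ + D.Lv τ ≤ n → D.lt σ τ → D.lt τ σ → False := by
  intro n
  induction n with
  | zero => intro σ τ h; simp [BHData.Lv] at h
  | succ n ih =>
    intro σ τ hn h1 h2
    cases h1 with
    | left hst H =>
      cases h2 with
      | left hts _ => exact absurd hst (not_lt.2 hts.le)
      | right_lt x _ hx hlt =>
        exact ih (D.ι x) τ (by have := D.lv_iota_lt hD hx; omega) (H x hx) hlt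
      | right_eq x _ hx heq =>
        exact D.lt_irrefl_aux (D.ι x) (heq ▸ H x hx)
    | right_lt x hts hx hlt =>
      cases h2 with
      | left _ H =>
        exact ih σ (D.ι x) (by have := D.lv_iota_lt hD hx; omega) hlt (H x hx)
      | right_lt y hst _ _ => exact absurd hst (not_lt.2 hts.le)
      | right_eq y hst _ _ => exact absurd hst (not_lt.2 hts.le)
    | right_eq x hts hx heq =>
      cases h2 with
      | left _ H => exact D.lt_irrefl_aux (D.ι x) (heq ▸ H x hx)
      | right_lt y hst _ _ => exact absurd hst (not_lt.2 hts.le)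
      | right_eq y hst _ _ => exact absurd hst (not_lt.2 hts.le)

lemma BHData.lt_trans_aux (D : BHData X S) (hD : D.IsBH) :
    ∀ n, ∀ ρ σ τ : S, D.Lv ρ + D.Lv σ + D.Lv τ ≤ n →
      D.lt ρ σ → D.lt σ τ → D.lt ρ τ := by
  intro n
  induction n with
  | zero => intro ρ σ τ h; simp [BHData.Lv] at h
  | succ n ih =>
    intro ρ σ τ hn h1 h2
    cases h1 with
    | left hρσ H =>
      have h1' : D.lt ρ σ := .left hρσ H
      cases h2 with
      | left hστ G =>
        refine .left (hρσ.trans hστ) fun x hx => ?_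
        exact ih (D.ι x) σ τ (by have := D.lv_iota_lt hD hx; omega) (H x hx)
          (.left hστ G)
      | right_lt y hτσ hy hlt =>
        have h2' : D.lt σ τ := .right_lt y hτσ hy hlt
        have hρy : D.lt ρ (D.ι y) :=
          ih ρ σ (D.ι y) (by have := D.lv_iota_lt hD hy; omega) h1' hlt
        rcases lt_trichotomy ρ τ with h | rfl | h
        · refine .left h fun x hx => ?_
          exact ih (D.ι x) σ τ (by have := D.lv_iota_lt hD hx; omega) (H x hx) h2'
        · exact absurd h2' fun h2' =>
            D.lt_asymm_aux hD _ ρ σ le_rfl h1' h2'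
        · exact .right_lt y h hy hρy
      | right_eq y hτσ hy heq =>
        subst heq
        have h2' : D.lt (D.ι y) τ := .right_eq y hτσ hy rfl
        rcases lt_trichotomy ρ τ with h | rfl | h
        · refine .left h fun x hx => ?_
          exact ih (D.ι x) (D.ι y) τ (by have := D.lv_iota_lt hD hx; omega)
            (H x hx) h2'
        · exact absurd h2' fun h2' =>
            D.lt_asymm_aux hD _ ρ (D.ι y) le_rfl h1' h2'
        · exact .right_lt y h hy h1'
    | right_lt x hσρ hx hlt =>
      have h1' : D.lt ρ σ := .right_lt x hσρ hx hlt
      cases h2 with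
      | left hστ G =>
        exact ih ρ (D.ι x) τ (by have := D.lv_iota_lt hD hx; omega) hlt (G x hx)
      | right_lt y hτσ hy hlt2 =>
        have hρy : D.lt ρ (D.ι y) :=
          ih ρ σ (D.ι y) (by have := D.lv_iota_lt hD hy; omega) h1' hlt2
        exact .right_lt y (hτσ.trans hσρ) hy hρy
      | right_eq y hτσ hy heq =>
        exact .right_lt y (hτσ.trans hσρ) hy (heq ▸ h1')
    | right_eq x hσρ hx heq =>
      subst heq
      have h1' : D.lt (D.ι x) σ := .right_eq x hσρ hx rfl
      cases h2 with
      | left hστ G => exact G x hx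
      | right_lt y hτσ hy hlt2 =>
        have hρy : D.lt (D.ι x) (D.ι y) :=
          ih (D.ι x) σ (D.ι y) (by have := D.lv_iota_lt hD hy; omega) h1' hlt2
        exact .right_lt y (hτσ.trans hσρ) hy hρy
      | right_eq y hτσ hy heq2 =>
        exact .right_lt y (hτσ.trans hσρ) hy (heq2 ▸ h1')

lemma BHData.lt_total_aux (D : BHData X S) (hD : D.IsBH) :
    ∀ n, ∀ σ τ : S, D.Lv σ + D.Lv τ ≤ n → σ < τ → D.lt σ τ ∨ D.lt τ σ := by
  intro n
  induction n with
  | zero => intro σ τ h; simp [BHData.Lv] at h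
  | succ n ih =>
    intro σ τ hn h
    by_cases H : ∀ x ∈ D.supp σ, D.lt (D.ι x) τ
    · exact Or.inl (.left h H)
    · push_neg at H
      obtain ⟨x, hx, hnx⟩ := H
      rcases lt_trichotomy (D.ι x) τ with h' | h' | h'
      · rcases ih (D.ι x) τ (by have := D.lv_iota_lt hD hx; omega) h' with h'' | h''
        · exact absurd h'' hnx
        · exact Or.inr (.right_lt x h hx h'')
      · exact Or.inr (.right_eq x h hx h'.symm)
      · rcases ih τ (D.ι x) (by have := D.lv_iota_lt hD hx; omega) h' with h'' | h''
        · exact Or.inr (.right_lt x h hx h'')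
        · exact absurd h'' hnx

/-- Transitivity of the collapse order of a Bachmann-Howard system; hence
`(ϑ_T(X), <_{ϑ_T(X)})` is a linear (strict total) order. -/
theorem BHData.lt_trans (D : BHData X S) (hD : D.IsBH) :
    (∀ ρ σ τ : S, D.lt ρ σ → D.lt σ τ → D.lt ρ τ) ∧ IsStrictTotalOrder S D.lt := by
  have htr : ∀ ρ σ τ : S, D.lt ρ σ → D.lt σ τ → D.lt ρ τ := fun ρ σ τ h1 h2 =>
    D.lt_trans_aux hD _ ρ σ τ le_rfl h1 h2
  refine ⟨htr, ?_⟩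
  haveI : IsIrrefl S D.lt := ⟨D.lt_irrefl_aux⟩
  haveI : IsTrans S D.lt := ⟨htr⟩
  haveI : IsTrichotomous S D.lt := ⟨fun σ τ hst hts => by
    refine (?_ : D.lt σ τ ∨ σ = τ ∨ D.lt τ σ).elim (absurd · hst) (·.elim id (absurd · hts))
    rcases lt_trichotomy σ τ with h | h | h
    · rcases D.lt_total_aux hD _ σ τ le_rfl h with h' | h'
      · exact Or.inl h'
      · exact Or.inr (Or.inr h')
    · exact Or.inr (Or.inl h)
    · rcases D.lt_total_aux hD _ τ σ le_rfl h with h' | h'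
      · exact Or.inr (Or.inr h')
      · exact Or.inl h'⟩
  haveI : IsStrictOrder S D.lt := ⟨⟩
  constructor
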